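/- Let p > 1 and 0 < ω < ω_p, where ω_p = p/(p+1)². Then α − f(α)/f'(α) = (p−1)·α^p·(1−2α^{p−1}) / (−ω + p·α^{p−1} − (2p−1)·α^{2(p−1)}), and this quantity satisfies α − f(α)/f'(α) > (p−1)·α^p·(1−2α^{p−1}) / (p·α^{p−1} − (2p−1)·α^{2(p−1)}) > 0, where α = (p/(2(2p−1)))^{1/(p−1)} and f'(u) = −ω + p·u^{p−1} − (2p−1)·u^{2(p−1)}. -/

import Mathlib

open Real Set Filter Topology

/-- For `p > 1` and `0 < ω < ω_p`:
`α - f(α)/f'(α) = (p-1) α^p (1 - 2 α^(p-1)) / (-ω + p α^(p-1) - (2p-1) α^(2(p-1)))`, and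
this quantity is `> (p-1) α^p (1 - 2 α^(p-1)) / (p α^(p-1) - (2p-1) α^(2(p-1))) > 0`. -/
theorem alpha_sub_f_div_f' (p ω : ℝ) (hp : 1 < p) (hω : 0 < ω)
    (hωp : ω < p / (p + 1) ^ 2)
    (f f' : ℝ → ℝ)
    (hf : ∀ u > (0 : ℝ), f u = -ω * u + u ^ p - u ^ (2 * p - 1))
    (hf' : ∀ u > (0 : ℝ), f' u = -ω + p * u ^ (p - 1) - (2 * p - 1) * u ^ (2 * (p - 1)))
    (α : ℝ) (hα : α = (p / (2 * (2 * p - 1))) ^ (1 / (p - 1))) :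
    α - f α / f' α
      = (p - 1) * α ^ p * (1 - 2 * α ^ (p - 1))
        / (-ω + p * α ^ (p - 1) - (2 * p - 1) * α ^ (2 * (p - 1))) ∧
    (p - 1) * α ^ p * (1 - 2 * α ^ (p - 1))
        / (p * α ^ (p - 1) - (2 * p - 1) * α ^ (2 * (p - 1)))
      < α - f α / f' α ∧
    0 < (p - 1) * α ^ p * (1 - 2 * α ^ (p - 1))
        / (p * α ^ (p - 1) - (2 * p - 1) * α ^ (2 * (p - 1))) := by
  have hp0 : (0:ℝ) < p := by linarith
  have h2p1 : (0:ℝ) < 2 * p - 1 := by linarith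
  have hpne : p - 1 ≠ 0 := by intro h; nlinarith [sub_eq_zero.mp h]
  set A : ℝ := p / (2 * (2 * p - 1)) with hAdef
  have hA : 0 < A := by positivity
  have hA2 : A < 1 / 2 := by
    rw [hAdef, div_lt_div_iff₀ (by positivity) (by norm_num)]
    nlinarith
  have hαpos : 0 < α := by rw [hα]; positivity
  have h1 : α ^ (p - 1) = A := by
    rw [hα, ← Real.rpow_mul hA.le, one_div, inv_mul_cancel₀ hpne, Real.rpow_one]
  have h2 : α ^ (2 * (p - 1)) = A ^ 2 := by
    rw [show (2:ℝ) * (p - 1) = (p - 1) * 2 by ring, Real.rpow_mul hαpos.le, h1,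
      Real.rpow_two]
  have h3 : α ^ p = A * α := by
    rw [show p = (p - 1) + 1 by ring, Real.rpow_add hαpos, Real.rpow_one, h1]
  have h4 : α ^ (2 * p - 1) = A ^ 2 * α := by
    rw [show 2 * p - 1 = 2 * (p - 1) + 1 by ring, Real.rpow_add hαpos, Real.rpow_one, h2]
  have hfα : f α = α * (A - A ^ 2 - ω) := by
    rw [hf α hαpos, h3, h4]; ring
  have hf'α : f' α = -ω + p * A - (2 * p - 1) * A ^ 2 := by
    rw [hf' α hαpos, h1, h2]
  have hD0eq : p * A - (2 * p - 1) * A ^ 2 = p ^ 2 / (4 * (2 * p - 1)) := by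
    rw [hAdef]; field_simp; ring
  have hD0 : 0 < p * A - (2 * p - 1) * A ^ 2 := by
    rw [hD0eq]; positivity
  have hωlt : ω < p ^ 2 / (4 * (2 * p - 1)) := by
    refine lt_of_lt_of_le hωp ?_
    rw [div_le_div_iff₀ (by positivity) (by positivity)]
    nlinarith [mul_nonneg (mul_nonneg hp0.le (sq_nonneg (p - 1))) (by linarith : (0:ℝ) ≤ p + 4)]
  have hD : 0 < -ω + p * A - (2 * p - 1) * A ^ 2 := by
    rw [← hD0eq] at hωlt; linarith
  have hN' : 0 < (p - 1) * (A * α) * (1 - 2 * A) :=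
    mul_pos (mul_pos (by linarith) (by positivity)) (by linarith)
  have heq : α - f α / f' α
      = (p - 1) * α ^ p * (1 - 2 * α ^ (p - 1))
        / (-ω + p * α ^ (p - 1) - (2 * p - 1) * α ^ (2 * (p - 1))) := by
    rw [hfα, hf'α, h1, h2, h3]
    rw [eq_div_iff hD.ne', sub_mul, div_mul_cancel₀ _ hD.ne']
    ring
  refine ⟨heq, ?_, ?_⟩
  · rw [heq, h1, h2, h3]
    exact div_lt_div_of_pos_left hN' hD (by linarith)
  · rw [h1, h2, h3]
    exact div_pos hN' (by linarith)
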